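/- The packing chromatic number of the distance graph D(4,5) is at least 13. -/

import Mathlib

/-- The infinite distance graph `D(k,t)` on vertex set `ℤ`: distinct `i, j` are
adjacent iff `|i - j| ∈ {k, t}`. -/
def distGraph (k t : ℕ) : SimpleGraph ℤ where
  Adj i j := i ≠ j ∧ ((i - j).natAbs = k ∨ (i - j).natAbs = t)
  symm := by
    constructor
    rintro i j ⟨hne, hd⟩
    refine ⟨hne.symm, ?_⟩
    rwa [show j - i = -(i - j) by ring, Int.natAbs_neg]
  loopless := by constructor; rintro i ⟨hne, -⟩; exact hne rfl

/-- `c` is a packing `p`-coloring of `G`: each vertex gets a color in `{1, …, p}`,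
and any two distinct vertices with the same color `c` are at distance greater
than `c` (in particular, unreachable pairs have infinite distance). -/
def IsPackingColoring {V : Type*} (G : SimpleGraph V) (p : ℕ) (c : V → ℕ) : Prop :=
  (∀ v, 1 ≤ c v ∧ c v ≤ p) ∧
  ∀ u v : V, u ≠ v → c u = c v → (c u : ℕ∞) < G.edist u v

/-- The packing chromatic number of `G`: the smallest `p` (as an element of `ℕ∞`,
being `⊤` if no finite packing coloring exists) admitting a packing `p`-coloring. -/
noncomputable def packingChromaticNumber {V : Type*} (G : SimpleGraph V) : ℕ∞ :=
  sInf {q : ℕ∞ | ∃ p : ℕ, q = p ∧ ∃ c : V → ℕ, IsPackingColoring G p c}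


lemma dg_adj (u s : ℤ) (hs : s = 4 ∨ s = -4 ∨ s = 5 ∨ s = -5) :
    (distGraph 4 5).Adj u (u + s) := by
  refine ⟨by omega, ?_⟩
  have : u - (u + s) = -s := by ring
  rw [this]
  omega

lemma walk_bound : ∀ (n : ℕ) (a b : ℤ), a.natAbs + b.natAbs = n → ∀ u : ℤ,
    (distGraph 4 5).edist u (u + (4 * a + 5 * b)) ≤ (n : ℕ∞) := by
  intro n
  induction n with
  | zero =>
    intro a b h u
    have ha : a = 0 := by omega
    have hb : b = 0 := by omega
    subst ha; subst hb
    simp [SimpleGraph.edist_self]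
  | succ m ih =>
    intro a b h u
    have key : ∀ s a' b' : ℤ, (s = 4 ∨ s = -4 ∨ s = 5 ∨ s = -5) →
        4 * a + 5 * b = s + (4 * a' + 5 * b') → a'.natAbs + b'.natAbs = m →
        (distGraph 4 5).edist u (u + (4 * a + 5 * b)) ≤ ((m + 1 : ℕ) : ℕ∞) := by
      intro s a' b' hs heq hm
      have h1 : (distGraph 4 5).edist u (u + s) ≤ 1 :=
        le_of_eq (SimpleGraph.edist_eq_one_iff_adj.2 (dg_adj u s hs))
      have h2 : (distGraph 4 5).edist (u + s) ((u + s) + (4 * a' + 5 * b')) ≤ (m : ℕ∞) :=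
        ih a' b' hm (u + s)
      have h3 : u + (4 * a + 5 * b) = (u + s) + (4 * a' + 5 * b') := by omega
      rw [h3]
      calc (distGraph 4 5).edist u ((u + s) + (4 * a' + 5 * b'))
          ≤ (distGraph 4 5).edist u (u + s) +
            (distGraph 4 5).edist (u + s) ((u + s) + (4 * a' + 5 * b')) :=
            SimpleGraph.edist_triangle
        _ ≤ 1 + (m : ℕ∞) := add_le_add h1 h2
        _ = ((m + 1 : ℕ) : ℕ∞) := by push_cast; rw [add_comm]
    rcases lt_trichotomy a 0 with ha | ha | ha
    · exact key (-4) (a + 1) b (by omega) (by ring) (by omega)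
    · rcases lt_trichotomy b 0 with hb | hb | hb
      · exact key (-5) a (b + 1) (by omega) (by ring) (by omega)
      · omega
      · exact key 5 a (b - 1) (by omega) (by ring) (by omega)
    · exact key 4 (a - 1) b (by omega) (by ring) (by omega)

/-- difference `d` is "forbidden" for color `k`: there is a short walk. -/
def Forb (k d : ℕ) : Prop :=
  ∃ a b : ℤ, 4 * a + 5 * b = (d : ℤ) ∧ a.natAbs + b.natAbs ≤ k

lemma pair_false {c : ℤ → ℕ}
    (hc2 : ∀ u v : ℤ, u ≠ v → c u = c v → (c u : ℕ∞) < (distGraph 4 5).edist u v)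
    {x y : ℤ} (hxy : x < y) (hcc : c x = c y) (hf : Forb (c x) (y - x).toNat) : False := by
  obtain ⟨a, b, hab, hw⟩ := hf
  have h1 := hc2 x y (ne_of_lt hxy) hcc
  have h3 : y = x + (4 * a + 5 * b) := by omega
  have h2 : (distGraph 4 5).edist x y ≤ ((a.natAbs + b.natAbs : ℕ) : ℕ∞) := by
    rw [h3]; exact walk_bound _ a b rfl x
  have h4 : ((a.natAbs + b.natAbs : ℕ) : ℕ∞) ≤ (c x : ℕ∞) := by exact_mod_cast hw
  exact absurd h1 (not_lt.2 (h2.trans h4))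

lemma pair_gap {c : ℤ → ℕ}
    (hc2 : ∀ u v : ℤ, u ≠ v → c u = c v → (c u : ℕ∞) < (distGraph 4 5).edist u v)
    {x y : ℤ} {k : ℕ} (hx : c x = k) (hy : c y = k) (hxy : x < y)
    (F : List ℕ) (hF : ∀ d ∈ F, Forb k d) : (y - x).toNat ∉ F := by
  intro hm
  exact pair_false hc2 hxy (hx.trans hy.symm) (hx ▸ hF _ hm)

lemma bridge1 : ∀ d ∈ ([4, 5] : List ℕ), Forb 1 d := by
  intro d hd
  fin_cases hd
  · exact ⟨1, 0, by norm_num, by decide⟩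
  · exact ⟨0, 1, by norm_num, by decide⟩

lemma bridge2 : ∀ d ∈ ([1, 4, 5, 8, 9, 10] : List ℕ), Forb 2 d := by
  intro d hd
  fin_cases hd
  · exact ⟨-1, 1, by norm_num, by decide⟩
  · exact ⟨1, 0, by norm_num, by decide⟩
  · exact ⟨0, 1, by norm_num, by decide⟩
  · exact ⟨2, 0, by norm_num, by decide⟩
  · exact ⟨1, 1, by norm_num, by decide⟩
  · exact ⟨0, 2, by norm_num, by decide⟩

lemma bridge3 : ∀ d ∈ ([1, 3, 4, 5, 6, 8, 9, 10, 12, 13, 14, 15] : List ℕ), Forb 3 d := by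
  intro d hd
  fin_cases hd
  · exact ⟨-1, 1, by norm_num, by decide⟩
  · exact ⟨2, -1, by norm_num, by decide⟩
  · exact ⟨1, 0, by norm_num, by decide⟩
  · exact ⟨0, 1, by norm_num, by decide⟩
  · exact ⟨-1, 2, by norm_num, by decide⟩
  · exact ⟨2, 0, by norm_num, by decide⟩
  · exact ⟨1, 1, by norm_num, by decide⟩
  · exact ⟨0, 2, by norm_num, by decide⟩
  · exact ⟨3, 0, by norm_num, by decide⟩
  · exact ⟨2, 1, by norm_num, by decide⟩
  · exact ⟨1, 2, by norm_num, by decide⟩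
  · exact ⟨0, 3, by norm_num, by decide⟩

lemma bridge_ge4 (k d : ℕ) (h4 : 4 ≤ k) (h1 : 1 ≤ d) (h5 : d ≤ 5 * k) : Forb k d := by
  rcases Nat.lt_or_ge d 12 with hd | hd
  · interval_cases d
    · exact ⟨-1, 1, by norm_num, by omega⟩
    · exact ⟨-2, 2, by norm_num, by omega⟩
    · exact ⟨2, -1, by norm_num, by omega⟩
    · exact ⟨1, 0, by norm_num, by omega⟩
    · exact ⟨0, 1, by norm_num, by omega⟩
    · exact ⟨-1, 2, by norm_num, by omega⟩
    · exact ⟨3, -1, by norm_num, by omega⟩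
    · exact ⟨2, 0, by norm_num, by omega⟩
    · exact ⟨1, 1, by norm_num, by omega⟩
    · exact ⟨0, 2, by norm_num, by omega⟩
    · exact ⟨-1, 3, by norm_num, by omega⟩
  · -- d ≥ 12 : write d = 5*q + r
    have hq := Nat.div_add_mod d 5
    set q := d / 5 with hqdef
    set r := d % 5 with hrdef
    have hr : r < 5 := Nat.mod_lt _ (by norm_num)
    have hq2 : 2 ≤ q := by omega
    interval_cases r
    · exact ⟨0, (q : ℤ), by push_cast; omega, by omega⟩
    · exact ⟨4, (q : ℤ) - 3, by push_cast; omega, by omega⟩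
    · exact ⟨3, (q : ℤ) - 2, by push_cast; omega, by omega⟩
    · exact ⟨2, (q : ℤ) - 1, by push_cast; omega, by omega⟩
    · exact ⟨1, (q : ℤ), by push_cast; omega, by omega⟩


def L1 : List ℕ := [4, 5]
def L2 : List ℕ := [1, 4, 5, 8, 9, 10]
def L3 : List ℕ := [1, 3, 4, 5, 6, 8, 9, 10, 12, 13, 14, 15]

set_option synthInstance.maxSize 5000 in
set_option maxHeartbeats 2000000 in
lemma G1 : ∀ a < 9, ∀ b < 9, ∀ c < 9, ∀ d < 9,
    (0 < a ∧ 0 < b ∧ 0 < c ∧ 0 < d ∧ a + b + c + d ≤ 8 ∧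
     a ∉ L1 ∧ b ∉ L1 ∧ c ∉ L1 ∧ d ∉ L1 ∧
     a + b ∉ L1 ∧ b + c ∉ L1 ∧ c + d ∉ L1 ∧
     a + b + c ∉ L1 ∧ b + c + d ∉ L1 ∧ a + b + c + d ∉ L1) → False := by decide

set_option synthInstance.maxSize 5000 in
set_option maxHeartbeats 2000000 in
lemma G3 : ∀ a < 18, ∀ b < 18,
    (0 < a ∧ 0 < b ∧ a + b ≤ 17 ∧ a ∉ L3 ∧ b ∉ L3 ∧ a + b ∉ L3) → False := by decide

set_option synthInstance.maxSize 5000 in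
set_option maxHeartbeats 2000000 in
lemma G2a : ∀ a < 31, ∀ b < 31, ∀ c < 31,
    (0 < a ∧ 0 < b ∧ 0 < c ∧ a + b + c ≤ 30 ∧
     a ∉ L2 ∧ b ∉ L2 ∧ c ∉ L2 ∧ a + b ∉ L2 ∧ b + c ∉ L2 ∧ a + b + c ∉ L2) →
    15 ≤ a + b + c := by decide

set_option synthInstance.maxSize 5000 in
set_option maxHeartbeats 2000000 in
lemma G2b : ∀ a < 16, ∀ b < 16, ∀ c < 16,
    (0 < a ∧ 0 < b ∧ 0 < c ∧ a + b + c = 15 ∧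
     a ∉ L2 ∧ b ∉ L2 ∧ c ∉ L2 ∧ a + b ∉ L2 ∧ b + c ∉ L2 ∧ a + b + c ∉ L2) →
    a = 2 ∧ b = 11 ∧ c = 2 := by decide

lemma exists_mono (T : Finset ℤ) {n : ℕ} (h : n ≤ T.card) :
    ∃ f : Fin n → ℤ, StrictMono f ∧ ∀ i, f i ∈ T :=
  ⟨T.orderEmbOfCardLe h, (T.orderEmbOfCardLe h).strictMono,
    fun i => T.orderEmbOfCardLe_mem h i⟩

lemma block1 {c : ℤ → ℕ}
    (hc2 : ∀ u v : ℤ, u ≠ v → c u = c v → (c u : ℕ∞) < (distGraph 4 5).edist u v)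
    (S : Finset ℤ) (hcol : ∀ x ∈ S, c x = 1) (a : ℤ) :
    (S.filter (fun x => a ≤ x ∧ x < a + 9)).card ≤ 4 := by
  by_contra hcard
  push_neg at hcard
  obtain ⟨f, hmono, hmem⟩ := exists_mono _ hcard
  have hm : ∀ i, f i ∈ S ∧ a ≤ f i ∧ f i < a + 9 := by
    intro i
    have := hmem i
    rw [Finset.mem_filter] at this
    exact ⟨this.1, this.2.1, this.2.2⟩
  have col : ∀ i, c (f i) = 1 := fun i => hcol _ (hm i).1
  have gap : ∀ i j : Fin 5, i < j → (f j - f i).toNat ∉ L1 :=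
    fun i j hij => pair_gap hc2 (col i) (col j) (hmono hij) L1 bridge1
  have l01 : f 0 < f 1 := hmono (by decide)
  have l12 : f 1 < f 2 := hmono (by decide)
  have l23 : f 2 < f 3 := hmono (by decide)
  have l34 : f 3 < f 4 := hmono (by decide)
  have b0 := (hm 0).2.1
  have b4 := (hm 4).2.2
  have h01 := gap 0 1 (by decide)
  have h12 := gap 1 2 (by decide)
  have h23 := gap 2 3 (by decide)
  have h34 := gap 3 4 (by decide)
  have h02 := gap 0 2 (by decide)
  have h13 := gap 1 3 (by decide)
  have h24 := gap 2 4 (by decide)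
  have h03 := gap 0 3 (by decide)
  have h14 := gap 1 4 (by decide)
  have h04 := gap 0 4 (by decide)
  set g0 := (f 1 - f 0).toNat with hg0
  set g1 := (f 2 - f 1).toNat with hg1
  set g2 := (f 3 - f 2).toNat with hg2
  set g3 := (f 4 - f 3).toNat with hg3
  have e02 : (f 2 - f 0).toNat = g0 + g1 := by omega
  have e13 : (f 3 - f 1).toNat = g1 + g2 := by omega
  have e24 : (f 4 - f 2).toNat = g2 + g3 := by omega
  have e03 : (f 3 - f 0).toNat = g0 + g1 + g2 := by omega
  have e14 : (f 4 - f 1).toNat = g1 + g2 + g3 := by omega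
  have e04 : (f 4 - f 0).toNat = g0 + g1 + g2 + g3 := by omega
  exact G1 g0 (by omega) g1 (by omega) g2 (by omega) g3 (by omega)
    ⟨by omega, by omega, by omega, by omega, by omega,
     h01, h12, h23, h34, e02 ▸ h02, e13 ▸ h13, e24 ▸ h24,
     e03 ▸ h03, e14 ▸ h14, e04 ▸ h04⟩

lemma block3 {c : ℤ → ℕ}
    (hc2 : ∀ u v : ℤ, u ≠ v → c u = c v → (c u : ℕ∞) < (distGraph 4 5).edist u v)
    (S : Finset ℤ) (hcol : ∀ x ∈ S, c x = 3) (a : ℤ) :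
    (S.filter (fun x => a ≤ x ∧ x < a + 18)).card ≤ 2 := by
  by_contra hcard
  push_neg at hcard
  obtain ⟨f, hmono, hmem⟩ := exists_mono _ hcard
  have hm : ∀ i, f i ∈ S ∧ a ≤ f i ∧ f i < a + 18 := by
    intro i
    have := hmem i
    rw [Finset.mem_filter] at this
    exact ⟨this.1, this.2.1, this.2.2⟩
  have col : ∀ i, c (f i) = 3 := fun i => hcol _ (hm i).1
  have gap : ∀ i j : Fin 3, i < j → (f j - f i).toNat ∉ L3 :=
    fun i j hij => pair_gap hc2 (col i) (col j) (hmono hij) L3 bridge3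
  have l01 : f 0 < f 1 := hmono (by decide)
  have l12 : f 1 < f 2 := hmono (by decide)
  have b0 := (hm 0).2.1
  have b2 := (hm 2).2.2
  have h01 := gap 0 1 (by decide)
  have h12 := gap 1 2 (by decide)
  have h02 := gap 0 2 (by decide)
  set g0 := (f 1 - f 0).toNat with hg0
  set g1 := (f 2 - f 1).toNat with hg1
  have e02 : (f 2 - f 0).toNat = g0 + g1 := by omega
  exact G3 g0 (by omega) g1 (by omega)
    ⟨by omega, by omega, by omega, h01, h12, e02 ▸ h02⟩

lemma block2 {c : ℤ → ℕ}
    (hc2 : ∀ u v : ℤ, u ≠ v → c u = c v → (c u : ℕ∞) < (distGraph 4 5).edist u v)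
    (S : Finset ℤ) (hcol : ∀ x ∈ S, c x = 2) (a : ℤ) :
    (S.filter (fun x => a ≤ x ∧ x < a + 31)).card ≤ 6 := by
  by_contra hcard
  push_neg at hcard
  obtain ⟨f, hmono, hmem⟩ := exists_mono _ hcard
  have hm : ∀ i, f i ∈ S ∧ a ≤ f i ∧ f i < a + 31 := by
    intro i
    have := hmem i
    rw [Finset.mem_filter] at this
    exact ⟨this.1, this.2.1, this.2.2⟩
  have col : ∀ i, c (f i) = 2 := fun i => hcol _ (hm i).1
  have gap : ∀ i j : Fin 7, i < j → (f j - f i).toNat ∉ L2 :=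
    fun i j hij => pair_gap hc2 (col i) (col j) (hmono hij) L2 bridge2
  have l01 : f 0 < f 1 := hmono (by decide)
  have l12 : f 1 < f 2 := hmono (by decide)
  have l23 : f 2 < f 3 := hmono (by decide)
  have l34 : f 3 < f 4 := hmono (by decide)
  have l45 : f 4 < f 5 := hmono (by decide)
  have l56 : f 5 < f 6 := hmono (by decide)
  have b0 := (hm 0).2.1
  have b6 := (hm 6).2.2
  have h01 := gap 0 1 (by decide)
  have h12 := gap 1 2 (by decide)
  have h23 := gap 2 3 (by decide)
  have h02 := gap 0 2 (by decide)
  have h13 := gap 1 3 (by decide)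
  have h03 := gap 0 3 (by decide)
  have h34 := gap 3 4 (by decide)
  have h45 := gap 4 5 (by decide)
  have h56 := gap 5 6 (by decide)
  have h35 := gap 3 5 (by decide)
  have h46 := gap 4 6 (by decide)
  have h36 := gap 3 6 (by decide)
  have h24 := gap 2 4 (by decide)
  set g0 := (f 1 - f 0).toNat with hg0
  set g1 := (f 2 - f 1).toNat with hg1
  set g2 := (f 3 - f 2).toNat with hg2
  set g3 := (f 4 - f 3).toNat with hg3
  set g4 := (f 5 - f 4).toNat with hg4
  set g5 := (f 6 - f 5).toNat with hg5
  have e02 : (f 2 - f 0).toNat = g0 + g1 := by omega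
  have e13 : (f 3 - f 1).toNat = g1 + g2 := by omega
  have e03 : (f 3 - f 0).toNat = g0 + g1 + g2 := by omega
  have e35 : (f 5 - f 3).toNat = g3 + g4 := by omega
  have e46 : (f 6 - f 4).toNat = g4 + g5 := by omega
  have e36 : (f 6 - f 3).toNat = g3 + g4 + g5 := by omega
  have span : g0 + g1 + g2 + (g3 + g4 + g5) ≤ 30 := by omega
  have hA : 15 ≤ g0 + g1 + g2 :=
    G2a g0 (by omega) g1 (by omega) g2 (by omega)
      ⟨by omega, by omega, by omega, by omega,
       h01, h12, h23, e02 ▸ h02, e13 ▸ h13, e03 ▸ h03⟩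
  have hB : 15 ≤ g3 + g4 + g5 :=
    G2a g3 (by omega) g4 (by omega) g5 (by omega)
      ⟨by omega, by omega, by omega, by omega,
       h34, h45, h56, e35 ▸ h35, e46 ▸ h46, e36 ▸ h36⟩
  have hA' : g0 + g1 + g2 = 15 := by omega
  have hB' : g3 + g4 + g5 = 15 := by omega
  have pat1 : g0 = 2 ∧ g1 = 11 ∧ g2 = 2 :=
    G2b g0 (by omega) g1 (by omega) g2 (by omega)
      ⟨by omega, by omega, by omega, hA',
       h01, h12, h23, e02 ▸ h02, e13 ▸ h13, e03 ▸ h03⟩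
  have pat2 : g3 = 2 ∧ g4 = 11 ∧ g5 = 2 :=
    G2b g3 (by omega) g4 (by omega) g5 (by omega)
      ⟨by omega, by omega, by omega, hB',
       h34, h45, h56, e35 ▸ h35, e46 ▸ h46, e36 ▸ h36⟩
  -- now f 4 - f 2 = g2 + g3 = 4 ∈ L2
  have e24 : (f 4 - f 2).toNat = 4 := by omega
  exact h24 (by rw [e24]; decide)

lemma block_ge4 {c : ℤ → ℕ}
    (hc2 : ∀ u v : ℤ, u ≠ v → c u = c v → (c u : ℕ∞) < (distGraph 4 5).edist u v)
    (k : ℕ) (h4 : 4 ≤ k)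
    (S : Finset ℤ) (hcol : ∀ x ∈ S, c x = k) (a : ℤ) :
    (S.filter (fun x => a ≤ x ∧ x < a + (5 * k + 1))).card ≤ 1 := by
  rw [Finset.card_le_one]
  intro x hx y hy
  rw [Finset.mem_filter] at hx hy
  by_contra hne
  -- wlog x < y
  rcases lt_trichotomy x y with hlt | heq | hlt
  · have hd : 1 ≤ (y - x).toNat ∧ (y - x).toNat ≤ 5 * k := by
      have := hx.2; have := hy.2; omega
    exact pair_false hc2 hlt ((hcol _ hx.1).trans (hcol _ hy.1).symm)
      ((hcol _ hx.1) ▸ bridge_ge4 k _ h4 hd.1 hd.2)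
  · exact hne heq
  · have hd : 1 ≤ (x - y).toNat ∧ (x - y).toNat ≤ 5 * k := by
      have := hx.2; have := hy.2; omega
    exact pair_false hc2 hlt ((hcol _ hy.1).trans (hcol _ hx.1).symm)
      ((hcol _ hy.1) ▸ bridge_ge4 k _ h4 hd.1 hd.2)

lemma card_le_of_blocks (S : Finset ℤ) (L w : ℤ) (N s : ℕ) (hw : 0 < w)
    (hS : S ⊆ Finset.Ico (0 : ℤ) L) (hLN : L ≤ (N : ℤ) * w)
    (hb : ∀ a : ℤ, (S.filter (fun x => a ≤ x ∧ x < a + w)).card ≤ s) :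
    S.card ≤ N * s := by
  have hsub : S ⊆ (Finset.range N).biUnion
      (fun j => S.filter (fun x => (j : ℤ) * w ≤ x ∧ x < (j : ℤ) * w + w)) := by
    intro x hx
    have hx' := hS hx
    rw [Finset.mem_Ico] at hx'
    have hq0 : 0 ≤ x / w := Int.ediv_nonneg hx'.1 hw.le
    have hqN : x / w < (N : ℤ) := by
      rw [Int.ediv_lt_iff_lt_mul hw]
      exact lt_of_lt_of_le hx'.2 hLN
    have e := Int.mul_ediv_add_emod x w
    have r1 := Int.emod_nonneg x (ne_of_gt hw)
    have r2 := Int.emod_lt_of_pos x hw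
    refine Finset.mem_biUnion.2 ⟨(x / w).toNat, Finset.mem_range.2 (by omega),
      Finset.mem_filter.2 ⟨hx, ?_, ?_⟩⟩
    · rw [Int.toNat_of_nonneg hq0, mul_comm]
      linarith
    · rw [Int.toNat_of_nonneg hq0, mul_comm]
      linarith
  calc S.card ≤ _ := Finset.card_le_card hsub
    _ ≤ ∑ j ∈ Finset.range N,
        (S.filter (fun x => (j : ℤ) * w ≤ x ∧ x < (j : ℤ) * w + w)).card :=
        Finset.card_biUnion_le
    _ ≤ ∑ _j ∈ Finset.range N, s := Finset.sum_le_sum (fun j _ => hb _)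
    _ = N * s := by rw [Finset.sum_const, Finset.card_range, smul_eq_mul]

/-- Per-color cardinality bounds in the window of length 5580. -/
def B : ℕ → ℕ
  | 1 => 2480
  | 2 => 1080
  | 3 => 620
  | 4 => 266
  | 5 => 215
  | 6 => 180
  | 7 => 155
  | 8 => 137
  | 9 => 122
  | 10 => 110
  | 11 => 100
  | 12 => 92
  | _ => 0

theorem packing_chromatic_D45 : 13 ≤ packingChromaticNumber (distGraph 4 5) := by
  refine le_sInf ?_
  rintro q ⟨p, rfl, c, hc1, hc2⟩
  by_contra hlt
  push_neg at hlt
  have hp' : p < 13 := by exact_mod_cast hlt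
  have hp12 : p ≤ 12 := by omega
  set W : Finset ℤ := Finset.Ico (0 : ℤ) 5580 with hW
  have hWcard : W.card = 5580 := by rw [hW, Int.card_Ico]; rfl
  have hfib : W.card = ∑ k ∈ Finset.Icc 1 12, (W.filter (fun v => c v = k)).card :=
    Finset.card_eq_sum_card_fiberwise
      (fun x _ => Finset.mem_Icc.2 ⟨(hc1 x).1, le_trans (hc1 x).2 hp12⟩)
  have hcol : ∀ k : ℕ, ∀ x ∈ W.filter (fun v => c v = k), c x = k :=
    fun k x hx => (Finset.mem_filter.1 hx).2
  have hsubW : ∀ k : ℕ, W.filter (fun v => c v = k) ⊆ Finset.Ico (0 : ℤ) 5580 :=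
    fun k => Finset.filter_subset _ _
  have hbound : ∀ k ∈ Finset.Icc 1 12, (W.filter (fun v => c v = k)).card ≤ B k := by
    intro k hk
    rw [Finset.mem_Icc] at hk
    obtain ⟨hk1, hk2⟩ := hk
    interval_cases k
    · exact (card_le_of_blocks _ 5580 9 620 4 (by norm_num) (hsubW 1) (by norm_num)
        (fun a => block1 hc2 _ (hcol 1) a)).trans (by norm_num [B])
    · exact (card_le_of_blocks _ 5580 31 180 6 (by norm_num) (hsubW 2) (by norm_num)
        (fun a => block2 hc2 _ (hcol 2) a)).trans (by norm_num [B])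
    · exact (card_le_of_blocks _ 5580 18 310 2 (by norm_num) (hsubW 3) (by norm_num)
        (fun a => block3 hc2 _ (hcol 3) a)).trans (by norm_num [B])
    · exact (card_le_of_blocks _ 5580 21 266 1 (by norm_num) (hsubW 4) (by norm_num)
        (fun a => by simpa using block_ge4 hc2 4 (by norm_num) _ (hcol 4) a)).trans
        (by norm_num [B])
    · exact (card_le_of_blocks _ 5580 26 215 1 (by norm_num) (hsubW 5) (by norm_num)
        (fun a => by simpa using block_ge4 hc2 5 (by norm_num) _ (hcol 5) a)).trans
        (by norm_num [B])
    · exact (card_le_of_blocks _ 5580 31 180 1 (by norm_num) (hsubW 6) (by norm_num)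
        (fun a => by simpa using block_ge4 hc2 6 (by norm_num) _ (hcol 6) a)).trans
        (by norm_num [B])
    · exact (card_le_of_blocks _ 5580 36 155 1 (by norm_num) (hsubW 7) (by norm_num)
        (fun a => by simpa using block_ge4 hc2 7 (by norm_num) _ (hcol 7) a)).trans
        (by norm_num [B])
    · exact (card_le_of_blocks _ 5580 41 137 1 (by norm_num) (hsubW 8) (by norm_num)
        (fun a => by simpa using block_ge4 hc2 8 (by norm_num) _ (hcol 8) a)).trans
        (by norm_num [B])
    · exact (card_le_of_blocks _ 5580 46 122 1 (by norm_num) (hsubW 9) (by norm_num)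
        (fun a => by simpa using block_ge4 hc2 9 (by norm_num) _ (hcol 9) a)).trans
        (by norm_num [B])
    · exact (card_le_of_blocks _ 5580 51 110 1 (by norm_num) (hsubW 10) (by norm_num)
        (fun a => by simpa using block_ge4 hc2 10 (by norm_num) _ (hcol 10) a)).trans
        (by norm_num [B])
    · exact (card_le_of_blocks _ 5580 56 100 1 (by norm_num) (hsubW 11) (by norm_num)
        (fun a => by simpa using block_ge4 hc2 11 (by norm_num) _ (hcol 11) a)).trans
        (by norm_num [B])
    · exact (card_le_of_blocks _ 5580 61 92 1 (by norm_num) (hsubW 12) (by norm_num)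
        (fun a => by simpa using block_ge4 hc2 12 (by norm_num) _ (hcol 12) a)).trans
        (by norm_num [B])
  have hsum : ∑ k ∈ Finset.Icc 1 12, (W.filter (fun v => c v = k)).card ≤
      ∑ k ∈ Finset.Icc 1 12, B k := Finset.sum_le_sum hbound
  have hBsum : ∑ k ∈ Finset.Icc 1 12, B k = 5557 := by decide
  omega
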